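/- Let L be a self adjoint endomorphism of ℂ^{2E} with P L = L P = 0 for an orthogonal projection P, Q = 1 - P, and let λ_max = max{|λ| : λ ∈ σ(L)\{0}} (assuming L ≠ 0). Then for every complex k with |k| > λ_max, the series 1 - 2P + 2 Σ_{n≥1} (iL)^n / k^n converges absolutely and equals S(k) = -P - Q(L + ik)^{-1}(L - ik)Q. -/

import Mathlib

open Matrix
open scoped Matrix.Norms.L2Operator

/-- The edge S-matrix in the Kuchment projector parametrisation:
S(k) = -P - Q (L + ik)⁻¹ (L - ik) Q with Q = 1 - P. -/
noncomputable def SPL {n : Type*} [Fintype n] [DecidableEq n]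
    (P L : Matrix n n ℂ) (k : ℂ) : Matrix n n ℂ :=
  -P - (1 - P) * (L + (Complex.I * k) • 1)⁻¹ * (L - (Complex.I * k) • 1) * (1 - P)

noncomputable instance {m : Type*} [Fintype m] [DecidableEq m] :
    CStarAlgebra (Matrix m m ℂ) := Matrix.instCStarAlgebra

set_option maxHeartbeats 1000000

/-- for |k| > λ_max (λ_max bounding the moduli of the eigenvalues of L),
the series 1 - 2P + 2 Σ_{n≥1} (iL)ⁿ/kⁿ converges absolutely and equals S(k). -/
theorem stmt_7 (E : ℕ) (P L : Matrix (Fin (2*E)) (Fin (2*E)) ℂ)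
    (hP : P.IsHermitian) (hP2 : P * P = P)
    (hL : L.IsHermitian) (hPL : P * L = 0) (hLP : L * P = 0) (hL0 : L ≠ 0)
    (lmax : ℝ) (hspec : ∀ μ : ℂ, μ ∈ spectrum ℂ L → ‖μ‖ ≤ lmax) :
    ∀ k : ℂ, lmax < ‖k‖ →
      Summable (fun n : ℕ => ‖(2 / k^(n+1)) • (Complex.I • L)^(n+1)‖) ∧
      HasSum (fun n : ℕ => (2 / k^(n+1)) • (Complex.I • L)^(n+1))
        (SPL P L k - (1 - 2 • P)) := by
  intro k hk
  -- the index type is nonempty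
  have hNE : 2 * E ≠ 0 := by
    intro h
    apply hL0
    ext i j
    exact absurd i.isLt (by omega)
  haveI : Nonempty (Fin (2*E)) := ⟨⟨0, Nat.pos_of_ne_zero hNE⟩⟩
  -- lmax is nonnegative
  have hlmax0 : 0 ≤ lmax := by
    obtain ⟨μ, hμ⟩ := spectrum.nonempty L
    exact le_trans (norm_nonneg μ) (hspec μ hμ)
  have hkabs : (0:ℝ) < ‖k‖ := lt_of_le_of_lt hlmax0 hk
  have hk0 : k ≠ 0 := by
    intro h; rw [h] at hkabs; simp at hkabs
  -- norm bound on L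
  have hLnorm : ‖L‖ ≤ lmax := by
    have hsa : IsSelfAdjoint L := hL.isSelfAdjoint
    have h1 : spectralRadius ℂ L ≤ ENNReal.ofReal lmax := by
      rw [spectralRadius]
      refine iSup₂_le fun μ hμ => ?_
      rw [← enorm_eq_nnnorm, ← ofReal_norm]
      exact ENNReal.ofReal_le_ofReal (by simpa using hspec μ hμ)
    rw [hsa.spectralRadius_eq_nnnorm] at h1
    have h2 : ENNReal.ofReal ‖L‖ ≤ ENNReal.ofReal lmax := by
      rwa [ofReal_norm, enorm_eq_nnnorm]
    exact (ENNReal.ofReal_le_ofReal_iff hlmax0).mp h2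
  -- set up the geometric variable
  set c : ℂ := Complex.I * k with hc_def
  have hc0 : c ≠ 0 := mul_ne_zero Complex.I_ne_zero hk0
  set x : Matrix (Fin (2*E)) (Fin (2*E)) ℂ := (Complex.I * k⁻¹) • L with hx_def
  have hxnorm : ‖x‖ < 1 := by
    rw [hx_def, norm_smul]
    have : ‖Complex.I * k⁻¹‖ = (‖k‖)⁻¹ := by
      simp [_root_.map_mul, map_inv₀]
    rw [this]
    calc (‖k‖)⁻¹ * ‖L‖ ≤ (‖k‖)⁻¹ * lmax := by
          exact mul_le_mul_of_nonneg_left hLnorm (by positivity)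
      _ < 1 := by
          rw [inv_mul_lt_iff₀ hkabs, mul_one]; exact hk
  -- the series terms
  have hterm : ∀ n : ℕ, (2 / k^(n+1)) • (Complex.I • L)^(n+1) = (2:ℂ) • x^(n+1) := by
    intro n
    rw [hx_def, smul_pow, smul_pow, smul_smul, smul_smul]
    congr 1
    rw [mul_pow, div_eq_mul_inv, ← inv_pow]
    ring
  -- summability
  have hsum1 : Summable (fun n : ℕ => ‖(2 / k^(n+1)) • (Complex.I • L)^(n+1)‖) := by
    have hg : Summable (fun n : ℕ => 2 * (‖x‖ * ‖x‖^n)) :=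
      ((summable_geometric_of_lt_one (norm_nonneg x) hxnorm).mul_left ‖x‖).mul_left 2
    refine Summable.of_nonneg_of_le (fun n => norm_nonneg _) (fun n => ?_) hg
    rw [hterm n, norm_smul]
    have h1 : ‖x^(n+1)‖ ≤ ‖x‖ * ‖x‖^n := by
      calc ‖x^(n+1)‖ ≤ ‖x‖^(n+1) := norm_pow_le' x n.succ_pos
        _ = ‖x‖ * ‖x‖^n := pow_succ' _ _
    have h2 : ‖(2:ℂ)‖ = 2 := by simp
    rw [h2]
    exact mul_le_mul_of_nonneg_left h1 (by norm_num)
  refine ⟨hsum1, ?_⟩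
  -- geometric series
  have hgeom : HasSum (fun n : ℕ => x^n) (Ring.inverse (1 - x)) :=
    hasSum_geom_series_inverse x hxnorm
  have hshift : HasSum (fun n : ℕ => x^(n+1)) (Ring.inverse (1 - x) - 1) := by
    rw [hasSum_nat_add_iff 1]
    simpa using hgeom
  have hfinal : HasSum (fun n : ℕ => (2/k^(n+1)) • (Complex.I • L)^(n+1))
      ((2:ℂ) • (Ring.inverse (1 - x) - 1)) := by
    simp_rw [hterm]
    exact hshift.const_smul (2:ℂ)
  convert hfinal using 1
  -- now the algebraic identity
  set A : Matrix (Fin (2*E)) (Fin (2*E)) ℂ := L + c • 1 with hA_def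
  have hAunit : IsUnit A := by
    have hmem : (-c) ∉ spectrum ℂ L := by
      intro hmem
      have h1 := hspec _ hmem
      have h2 : ‖-c‖ = ‖k‖ := by
        rw [hc_def]
        simp [Complex.norm_I]
      rw [h2] at h1
      exact absurd hk (not_lt.mpr h1)
    rw [spectrum.mem_iff, not_not] at hmem
    have heq : algebraMap ℂ (Matrix (Fin (2*E)) (Fin (2*E)) ℂ) (-c) - L = -A := by
      rw [Algebra.algebraMap_eq_smul_one, hA_def, neg_smul, neg_add]
      abel
    rw [heq] at hmem
    have hmem2 := hmem.neg
    rwa [neg_neg] at hmem2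
  have hdet : IsUnit A.det := (isUnit_iff_isUnit_det A).mp hAunit
  have hB1 : A * A⁻¹ = 1 := mul_nonsing_inv A hdet
  have hB2 : A⁻¹ * A = 1 := nonsing_inv_mul A hdet
  set B : Matrix (Fin (2*E)) (Fin (2*E)) ℂ := A⁻¹ with hB_def
  have hRinv : Ring.inverse (1 - x) = c • B := by
    have h1x : 1 - x = (-(Complex.I * k⁻¹)) • A := by
      rw [hA_def, smul_add, hx_def, smul_smul, hc_def]
      have hs : -(Complex.I * k⁻¹) * (Complex.I * k) = 1 := by
        calc -(Complex.I * k⁻¹) * (Complex.I * k)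
            = -(Complex.I * Complex.I) * (k⁻¹ * k) := by ring
          _ = 1 := by rw [Complex.I_mul_I, inv_mul_cancel₀ hk0]; ring
      rw [hs, neg_smul, one_smul]
      abel
    have hprod : (1 - x) * (c • B) = 1 := by
      rw [h1x, smul_mul_assoc, mul_smul_comm, hB1, smul_smul]
      have hs : -(Complex.I * k⁻¹) * c = 1 := by
        rw [hc_def]
        calc -(Complex.I * k⁻¹) * (Complex.I * k)
            = -(Complex.I * Complex.I) * (k⁻¹ * k) := by ring
          _ = 1 := by rw [Complex.I_mul_I, inv_mul_cancel₀ hk0]; ring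
      rw [hs, one_smul]
    rw [← Matrix.nonsing_inv_eq_ringInverse]
    exact Matrix.inv_eq_right_inv hprod
  have hPA : P * A = c • P := by
    rw [hA_def, mul_add, hPL, mul_smul_comm, mul_one, zero_add]
  have hAP : A * P = c • P := by
    rw [hA_def, add_mul, hLP, smul_mul_assoc, one_mul, zero_add]
  have hPB : P * B = c⁻¹ • P := by
    have h1 : P = c • (P * B) := by
      calc P = P * (A * B) := by rw [hB1, mul_one]
        _ = (P * A) * B := by rw [mul_assoc]
        _ = c • (P * B) := by rw [hPA, smul_mul_assoc]
    calc P * B = c⁻¹ • (c • (P * B)) := by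
          rw [smul_smul, inv_mul_cancel₀ hc0, one_smul]
      _ = c⁻¹ • P := by rw [← h1]
  have hBP : B * P = c⁻¹ • P := by
    have h1 : P = c • (B * P) := by
      calc P = (B * A) * P := by rw [hB2, one_mul]
        _ = B * (A * P) := by rw [mul_assoc]
        _ = c • (B * P) := by rw [hAP, mul_smul_comm]
    calc B * P = c⁻¹ • (c • (B * P)) := by
          rw [smul_smul, inv_mul_cancel₀ hc0, one_smul]
      _ = c⁻¹ • P := by rw [← h1]
  have hBL : B * L = 1 - c • B := by
    have h := hB2
    rw [hA_def, mul_add, mul_smul_comm, mul_one] at h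
    exact eq_sub_of_add_eq h
  rw [hRinv]
  rw [SPL, ← hc_def, ← hA_def, ← hB_def]
  simp only [sub_mul, mul_sub, one_mul, mul_one, smul_mul_assoc, mul_smul_comm,
    hPB, hBP, hBL, hPL, hLP, hP2, smul_smul, smul_zero, zero_mul, mul_zero,
    zero_smul, sub_zero, zero_sub, inv_mul_cancel₀ hc0, mul_inv_cancel₀ hc0, one_smul]
  have hcc : Complex.I * k * Complex.I⁻¹ * k⁻¹ = 1 := by
    calc Complex.I * k * Complex.I⁻¹ * k⁻¹
        = (Complex.I * Complex.I⁻¹) * (k * k⁻¹) := by ring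
      _ = 1 := by
          rw [mul_inv_cancel₀ Complex.I_ne_zero, mul_inv_cancel₀ hk0, one_mul]
  match_scalars
  all_goals try ring
  linear_combination (-1 : ℂ) * hcc
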